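/- The matrices R and T preserve the quadric surface S = {(x,y,z) ∈ ℝ³ : 4(x−z)² + 4y² = (x−y+z)²}: if (x,y,z) satisfies 4(x−z)² + 4y² = (x−y+z)², then both R·(x,y,z) and T·(x,y,z) satisfy the same equation. -/
import Mathlib

open Matrix

/-- The matrix `R`. -/
def R : Matrix (Fin 3) (Fin 3) ℝ := !![0,0,-1; 1,0,-1; 0,1,-1]

/-- The matrix `T`. -/
def T : Matrix (Fin 3) (Fin 3) ℝ := !![-1,0,0; 2,1,0; -4,0,1]

/-- `R` and `T` preserve the quadric surface `4(x−z)² + 4y² = (x−y+z)²`. -/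
theorem quadric_invariance (x y z : ℝ)
    (h : 4 * (x - z) ^ 2 + 4 * y ^ 2 = (x - y + z) ^ 2) :
    (4 * ((R.mulVec ![x, y, z]) 0 - (R.mulVec ![x, y, z]) 2) ^ 2 +
        4 * ((R.mulVec ![x, y, z]) 1) ^ 2 =
      ((R.mulVec ![x, y, z]) 0 - (R.mulVec ![x, y, z]) 1 + (R.mulVec ![x, y, z]) 2) ^ 2) ∧
    (4 * ((T.mulVec ![x, y, z]) 0 - (T.mulVec ![x, y, z]) 2) ^ 2 +
        4 * ((T.mulVec ![x, y, z]) 1) ^ 2 =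
      ((T.mulVec ![x, y, z]) 0 - (T.mulVec ![x, y, z]) 1 + (T.mulVec ![x, y, z]) 2) ^ 2) := by
  simp only [R, T, mulVec, dotProduct, Fin.sum_univ_three, of_apply, cons_val', cons_val_zero,
    cons_val_one, head_cons, empty_val', cons_val_fin_one, cons_val_two, tail_cons, head_fin_const]
  constructor <;> nlinarith [h]
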